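/- Let T be a rooted tree poset on {0,1,…,n} with root 0, and let T× be the forest poset on [n] obtained by deleting the root. Let Θ(T×) be the set of pairs (λ, ρ), where λ is a linear extension of T× (viewed as a permutation in S_n) and ρ is an ornamentation of T×, such that for every v ∈ [n] the elements of ρ(v) form a consecutive factor of λ. Order Θ(T×) as a subposet of the product of the weak order restricted to linear extensions of T× and the ornamentation lattice. Then Θ(T×) has a unique minimal element, namely (the identity-minimal linear extension, the ornamentation v ↦ {v}), and a unique maximal element. -/

import Mathlib

/-- The set of inversions of a permutation of `Fin n` (0-indexed): pairs `(i, j)` of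
values with `i < j` such that `j` appears before `i` in one-line notation. The right
weak order is containment of inversion sets. -/
def Inversions {n : ℕ} (w : Equiv.Perm (Fin n)) : Set (Fin n × Fin n) :=
  {p | p.1 < p.2 ∧ w.symm p.2 < w.symm p.1}

/-- `a` is covered by `x` in the partial order `P`. -/
def CovRel {α : Type*} (P : PartialOrder α) (a x : α) : Prop :=
  P.lt a x ∧ ∀ c, P.lt a c → P.lt c x → False

/-- `λ` is a linear extension of the forest poset `P` on `[n]`: whenever `x ≤_P y`,
the element `x` appears at an earlier position than `y` in one-line notation. -/
def IsLinExt {n : ℕ} (P : PartialOrder (Fin n)) (l : Equiv.Perm (Fin n)) : Prop :=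
  ∀ x y : Fin n, P.le x y → l.symm x ≤ l.symm y

/-- `S` is an ornament of the forest poset `P` hung at `v`: a connected subset of the
forest whose minimum is `v`; connectivity of a subset of a forest containing its
minimum `v` amounts to being closed under intermediate elements between `v` and any
member. -/
def OrnamentAt {n : ℕ} (P : PartialOrder (Fin n)) (v : Fin n) (S : Set (Fin n)) : Prop :=
  v ∈ S ∧ (∀ x ∈ S, P.le v x) ∧ ∀ x ∈ S, ∀ y : Fin n, P.le v y → P.le y x → y ∈ S

/-- An ornamentation of the forest poset `P`: each `v` is assigned an ornament hung at
`v`, and any two assigned ornaments are nested or disjoint. -/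
def IsOrnamentation {n : ℕ} (P : PartialOrder (Fin n)) (ρ : Fin n → Set (Fin n)) : Prop :=
  (∀ v : Fin n, OrnamentAt P v (ρ v)) ∧
    ∀ v w : Fin n, ρ v ⊆ ρ w ∨ ρ w ⊆ ρ v ∨ Disjoint (ρ v) (ρ w)

/-- Membership in `Θ(T×)`: pairs `(λ, ρ)` of a linear extension and an ornamentation
such that for every `v`, the elements of `ρ v` form a consecutive factor of the word
`λ` (they occupy a contiguous block of positions). -/
def ThetaMem {n : ℕ} (P : PartialOrder (Fin n))
    (p : Equiv.Perm (Fin n) × (Fin n → Set (Fin n))) : Prop :=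
  IsLinExt P p.1 ∧ IsOrnamentation P p.2 ∧
    ∀ v : Fin n, ∃ i len : ℕ,
      p.2 v = {x : Fin n | i ≤ (p.1.symm x : ℕ) ∧ (p.1.symm x : ℕ) < i + len}

/-- The partial order on `Θ(T×)`, induced from the product of the weak order on linear
extensions and the ornamentation lattice (pointwise containment). -/
def ThetaLE {n : ℕ} (p q : Equiv.Perm (Fin n) × (Fin n → Set (Fin n))) : Prop :=
  Inversions p.1 ⊆ Inversions q.1 ∧ ∀ v : Fin n, p.2 v ⊆ q.2 v


section Aux

variable {n : ℕ}

/-- Order underlying the maximal linear extension: comparable pairs keep natural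
order, incomparable pairs are reversed. Here `m v` is the largest element `P`-above `v`,
so (`x ≤ y` and `y ≤ m x`) encodes `x ≤_P y`. -/
def Lrel (m : Fin n → Fin n) (x y : Fin n) : Prop :=
  (x ≤ y ∧ y ≤ m x) ∨ (y ≤ x ∧ m y < x)

/-- Type synonym for `Fin n` carrying the order `Lrel m`. -/
structure Syn (n : ℕ) (m : Fin n → Fin n) where
  val : Fin n

def synEquiv (m : Fin n → Fin n) : Syn n m ≃ Fin n where
  toFun := Syn.val
  invFun := Syn.mk
  left_inv := fun ⟨_⟩ => rfl
  right_inv := fun _ => rfl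

instance (m : Fin n → Fin n) : Fintype (Syn n m) := Fintype.ofEquiv _ (synEquiv m).symm

lemma syn_card (m : Fin n → Fin n) : Fintype.card (Syn n m) = n := by
  rw [Fintype.card_congr (synEquiv m), Fintype.card_fin]

noncomputable def synLO (m : Fin n → Fin n) (h1 : ∀ v, v ≤ m v)
    (h2 : ∀ x y : Fin n, x ≤ y → y ≤ m x → m y ≤ m x) : LinearOrder (Syn n m) where
  le a b := Lrel m a.val b.val
  le_refl a := Or.inl ⟨le_refl _, h1 _⟩
  le_trans := by
    rintro ⟨x⟩ ⟨y⟩ ⟨z⟩ (⟨hxy, hy⟩ | ⟨hyx, hmy⟩) (⟨hyz, hz⟩ | ⟨hzy, hmz⟩)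
    · exact Or.inl ⟨le_trans hxy hyz, le_trans hz (h2 x y hxy hy)⟩
    · rcases le_total x z with h | h
      · exact Or.inl ⟨h, le_trans hzy hy⟩
      · refine Or.inr ⟨h, ?_⟩
        by_contra hc
        push_neg at hc
        have hxz := h2 z x h hc
        exact absurd (lt_of_le_of_lt (le_trans hy hxz) hmz) (lt_irrefl _)
    · exact Or.inr ⟨le_of_lt (lt_of_le_of_lt hz hmy), lt_of_le_of_lt (h2 y z hyz hz) hmy⟩
    · exact Or.inr ⟨le_trans hzy hyx, lt_of_lt_of_le hmz hyx⟩
  le_antisymm := by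
    rintro ⟨x⟩ ⟨y⟩ (⟨hxy, hy⟩ | ⟨hyx, hmy⟩) (⟨hyx', hx'⟩ | ⟨hxy', hmx'⟩)
    · exact congrArg Syn.mk (le_antisymm hxy hyx')
    · exact absurd (lt_of_le_of_lt hy hmx') (lt_irrefl _)
    · exact absurd (lt_of_le_of_lt hx' hmy) (lt_irrefl _)
    · exact congrArg Syn.mk (le_antisymm hxy' hyx)
  le_total := by
    rintro ⟨x⟩ ⟨y⟩
    rcases le_total x y with h | h
    · rcases le_or_gt y (m x) with h' | h'
      · exact Or.inl (Or.inl ⟨h, h'⟩)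
      · exact Or.inr (Or.inr ⟨h, h'⟩)
    · rcases le_or_gt x (m y) with h' | h'
      · exact Or.inr (Or.inl ⟨h, h'⟩)
      · exact Or.inl (Or.inr ⟨h, h'⟩)
  toDecidableLE := fun _ _ => Classical.dec _

lemma perm_strictMono_le (f : Equiv.Perm (Fin n)) (hf : StrictMono ⇑f) (i : Fin n) :
    i ≤ f i := by
  have H : ∀ k, ∀ hk : k < n, k ≤ ((f ⟨k, hk⟩ : Fin n) : ℕ) := by
    intro k
    induction k with
    | zero => intro hk; exact Nat.zero_le _
    | succ k ih =>
      intro hk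
      have hk' : k < n := Nat.lt_of_succ_lt hk
      have h2 : f ⟨k, hk'⟩ < f ⟨k + 1, hk⟩ := hf (by simp [Fin.lt_def])
      have h3 := ih hk'
      have h4 := Fin.lt_def.mp h2
      omega
  rcases i with ⟨k, hk⟩
  exact Fin.le_def.mpr (H k hk)

lemma perm_strictMono_eq_refl (f : Equiv.Perm (Fin n)) (hf : StrictMono ⇑f) :
    f = Equiv.refl (Fin n) := by
  have hfs : StrictMono ⇑f.symm := by
    intro a b hab
    have := hf.lt_iff_lt (a := f.symm a) (b := f.symm b)
    simp only [Equiv.apply_symm_apply] at this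
    exact this.mp hab
  apply Equiv.ext
  intro i
  have h1 : f.symm i ≤ f (f.symm i) := perm_strictMono_le f hf _
  rw [Equiv.apply_symm_apply] at h1
  have h2 : i ≤ f.symm i := perm_strictMono_le f.symm hfs i
  have h3 : f.symm i = i := le_antisymm h1 h2
  have h4 := congrArg f h3
  rw [Equiv.apply_symm_apply] at h4
  exact h4.symm

lemma inversions_injective {u w : Equiv.Perm (Fin n)}
    (h : Inversions u = Inversions w) : u = w := by
  have key : ∀ a b : Fin n, u.symm a < u.symm b → w.symm a < w.symm b := by
    intro a b hab
    have hne : a ≠ b := fun e => by subst e; exact lt_irrefl _ hab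
    rcases lt_or_gt_of_ne hne with h1 | h1
    · have hmem : (a, b) ∈ Inversions u ↔ (a, b) ∈ Inversions w := by rw [h]
      simp only [Inversions, Set.mem_setOf_eq, h1, true_and] at hmem
      have : ¬ u.symm b < u.symm a := not_lt.mpr (le_of_lt hab)
      have h2 : ¬ w.symm b < w.symm a := fun hc => this (hmem.mpr hc)
      rcases lt_or_eq_of_le (not_lt.mp h2) with h3 | h3
      · exact h3
      · exact absurd (w.symm.injective h3) hne
    · have hmem : (b, a) ∈ Inversions u ↔ (b, a) ∈ Inversions w := by rw [h]
      simp only [Inversions, Set.mem_setOf_eq, h1, true_and] at hmem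
      exact hmem.mp hab
  have hsm : StrictMono ⇑(u.trans w.symm) := by
    intro i j hij
    refine key (u i) (u j) ?_
    simpa using hij
  have := perm_strictMono_eq_refl _ hsm
  apply Equiv.ext
  intro x
  have hx := congrArg (fun e => e x) (congrArg Equiv.toFun this)
  simp only [Equiv.trans, Equiv.refl] at hx
  have : w.symm (u x) = x := hx
  have h5 := congrArg w this
  rw [Equiv.apply_symm_apply] at h5
  exact h5

end Aux
/-- Let `T` be a rooted plane tree on `{0, 1, …, n}` whose preorder traversal is
`0, 1, …, n`, and let `T×` be the forest poset on `[n]` obtained by deleting the root;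
thus `T×` is a forest poset (`hforest`), naturally labeled (`hnat`), in which the set of
elements above any `v` is a consecutive block starting at `v` (`hpre`, the preorder
property). Then the poset `Θ(T×)` has a unique minimal element, namely the pair
(identity permutation, singleton ornamentation `v ↦ {v}`), which is in fact its
minimum, and it has a unique maximal element (a maximum). -/
theorem stmt18 (n : ℕ) (P : PartialOrder (Fin n))
    (hforest : ∀ x a b : Fin n, CovRel P a x → CovRel P b x → a = b)
    (hnat : ∀ x y : Fin n, P.le x y → x ≤ y)
    (hpre : ∀ v : Fin n, ∃ s : ℕ,
      {x : Fin n | P.le v x} = {x : Fin n | (v : ℕ) ≤ (x : ℕ) ∧ (x : ℕ) < (v : ℕ) + s}) :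
    (ThetaMem P (Equiv.refl (Fin n), fun v => {v}) ∧
      ∀ p, ThetaMem P p → ThetaLE (Equiv.refl (Fin n), fun v => {v}) p) ∧
    (∃! q, ThetaMem P q ∧ ∀ p, ThetaMem P p → ThetaLE p q) := by
  classical
  -- canonical top element of each principal up-set
  have upne : ∀ v : Fin n, (Finset.univ.filter (fun x => P.le v x)).Nonempty :=
    fun v => ⟨v, by simp [P.le_refl v]⟩
  set m : Fin n → Fin n :=
    fun v => (Finset.univ.filter (fun x => P.le v x)).max' (upne v) with hmdef
  have hm1 : ∀ v, P.le v (m v) :=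
    fun v => (Finset.mem_filter.mp (Finset.max'_mem _ (upne v))).2
  have hm2 : ∀ v x, P.le v x → x ≤ m v :=
    fun v x hx => Finset.le_max' _ x (by simp [hx])
  have hcomp : ∀ v x : Fin n, P.le v x ↔ (v ≤ x ∧ x ≤ m v) := by
    intro v x
    constructor
    · exact fun h => ⟨hnat v x h, hm2 v x h⟩
    · rintro ⟨hvx, hxm⟩
      obtain ⟨s, hs⟩ := hpre v
      have hset := Set.ext_iff.mp hs
      simp only [Set.mem_setOf_eq] at hset
      have hmv := (hset (m v)).mp (hm1 v)
      refine (hset x).mpr ⟨Fin.le_def.mp hvx, ?_⟩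
      have := Fin.le_def.mp hxm
      omega
  have h1' : ∀ v, v ≤ m v := fun v => hnat _ _ (hm1 v)
  have h2' : ∀ x y : Fin n, x ≤ y → y ≤ m x → m y ≤ m x := by
    intro x y hxy hy
    exact hm2 x (m y) (P.le_trans _ _ _ ((hcomp x y).mpr ⟨hxy, hy⟩) (hm1 y))
  -- the maximal linear extension
  letI LO : LinearOrder (Syn n m) := synLO m h1' h2'
  set e : Fin n ≃o Syn n m := monoEquivOfFin (Syn n m) (syn_card m) with hedef
  set lam : Equiv.Perm (Fin n) := e.toEquiv.trans (synEquiv m) with hlamdef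
  have key : ∀ x y : Fin n, lam.symm x ≤ lam.symm y ↔ Lrel m x y := by
    intro x y
    have h := e.symm.le_iff_le (x := (synEquiv m).symm x) (y := (synEquiv m).symm y)
    exact h.trans (show ((synEquiv m).symm x ≤ (synEquiv m).symm y) ↔ Lrel m x y from Iff.rfl)
  have keyle : ∀ x y : Fin n, Lrel m x y → lam.symm x ≤ lam.symm y :=
    fun x y h => (key x y).mpr h
  have hchain : ∀ a b z : Fin n, P.le a z → P.le b z → P.le a b ∨ P.le b a := by
    intro a b z haz hbz
    rcases le_total a b with h | h
    · refine Or.inl ((hcomp a b).mpr ⟨h, ?_⟩)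
      have t1 : (b : ℕ) ≤ (z : ℕ) := hnat b z hbz
      have t2 : (z : ℕ) ≤ ((m a : Fin n) : ℕ) := hm2 a z haz
      exact le_trans t1 t2
    · refine Or.inr ((hcomp b a).mpr ⟨h, ?_⟩)
      have t1 : (a : ℕ) ≤ (z : ℕ) := hnat a z haz
      have t2 : (z : ℕ) ≤ ((m b : Fin n) : ℕ) := hm2 b z hbz
      exact le_trans t1 t2
  -- membership of the maximal pair
  have qmem : ThetaMem P (lam, fun v => {x | P.le v x}) := by
    refine ⟨?_, ⟨?_, ?_⟩, ?_⟩
    · intro x y hxy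
      exact keyle x y (Or.inl ⟨hnat _ _ hxy, hm2 _ _ hxy⟩)
    · intro v
      exact ⟨P.le_refl v, fun x hx => hx, fun x _ y hvy _ => hvy⟩
    · intro v w
      rcases em (Disjoint {x | P.le v x} {x | P.le w x}) with hd | hd
      · exact Or.inr (Or.inr hd)
      · obtain ⟨z, hz1, hz2⟩ := Set.not_disjoint_iff.mp hd
        rcases hchain v w z hz1 hz2 with h | h
        · exact Or.inr (Or.inl (fun x hx => P.le_trans _ _ _ h hx))
        · exact Or.inl (fun x hx => P.le_trans _ _ _ h hx)
    · intro v
      have conv : ∀ x z : Fin n, P.le v x → lam.symm v ≤ lam.symm z →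
          lam.symm z ≤ lam.symm x → P.le v z := by
        intro x z hx hvz hzx
        rcases (key v z).mp hvz with ⟨ha, hb⟩ | ⟨ha, hb⟩
        · exact (hcomp v z).mpr ⟨ha, hb⟩
        · rcases (key z x).mp hzx with ⟨hc, hd⟩ | ⟨hc, hd⟩
          · exfalso
            have t1 : (v : ℕ) ≤ (x : ℕ) := hnat v x hx
            have t2 : (x : ℕ) ≤ ((m z : Fin n) : ℕ) := hd
            have t3 : ((m z : Fin n) : ℕ) < (v : ℕ) := hb
            exact absurd (lt_of_le_of_lt (le_trans t1 t2) t3) (lt_irrefl _)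
          · have hz : z = v := by
              have t1 : (z : ℕ) ≤ (v : ℕ) := ha
              have t2 : (v : ℕ) ≤ (x : ℕ) := hnat v x hx
              have t3 : (x : ℕ) ≤ (z : ℕ) := hc
              exact Fin.ext (le_antisymm t1 (le_trans t2 t3))
            rw [hz]
      set i : ℕ := (lam.symm v : ℕ) with hidef
      set F : Finset (Fin n) := Finset.univ.filter (fun x => P.le v x) with hFdef
      refine ⟨i, F.card, ?_⟩
      set G : Finset ℕ := F.image (fun y => (lam.symm y : ℕ)) with hGdef
      have hGcard : G.card = F.card := by
        refine Finset.card_image_of_injective F ?_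
        intro a b hab
        exact lam.symm.injective (Fin.val_injective hab)
      have hsub : ∀ x : Fin n, P.le v x →
          i ≤ (lam.symm x : ℕ) ∧ (lam.symm x : ℕ) < i + F.card := by
        intro x hx
        have hle : i ≤ (lam.symm x : ℕ) :=
          Fin.le_def.mp (keyle v x (Or.inl ⟨hnat _ _ hx, hm2 _ _ hx⟩))
        refine ⟨hle, ?_⟩
        have hIcc : Finset.Icc i ((lam.symm x : Fin n) : ℕ) ⊆ G := by
          intro j hj
          rw [Finset.mem_Icc] at hj
          have hjn : j < n := lt_of_le_of_lt hj.2 (lam.symm x).isLt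
          have hz : lam.symm (lam ⟨j, hjn⟩) = ⟨j, hjn⟩ := Equiv.symm_apply_apply _ _
          have hvz : P.le v (lam ⟨j, hjn⟩) := by
            refine conv x (lam ⟨j, hjn⟩) hx ?_ ?_
            · rw [hz]; exact Fin.le_def.mpr hj.1
            · rw [hz]; exact Fin.le_def.mpr hj.2
          refine Finset.mem_image.mpr ⟨lam ⟨j, hjn⟩, by simp [hFdef, hvz], by rw [hz]⟩
        have hcard := Finset.card_le_card hIcc
        rw [Nat.card_Icc, hGcard] at hcard
        clear hx
        omega
      have hGsub : G ⊆ Finset.Ico i (i + F.card) := by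
        intro j hj
        obtain ⟨y, hy, rfl⟩ := Finset.mem_image.mp hj
        exact Finset.mem_Ico.mpr (hsub y (Finset.mem_filter.mp hy).2)
      have hGeq : G = Finset.Ico i (i + F.card) :=
        Finset.eq_of_subset_of_card_le hGsub (by rw [Nat.card_Ico, hGcard]; omega)
      apply Set.ext
      intro x
      simp only [Set.mem_setOf_eq]
      constructor
      · exact hsub x
      · rintro ⟨hx1, hx2⟩
        have hxG : (lam.symm x : ℕ) ∈ G := by
          rw [hGeq]; exact Finset.mem_Ico.mpr ⟨hx1, hx2⟩
        obtain ⟨y, hy, hyx⟩ := Finset.mem_image.mp hxG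
        have : y = x := lam.symm.injective (Fin.val_injective hyx)
        subst this
        exact (Finset.mem_filter.mp hy).2
  -- maximality
  have qmax : ∀ p, ThetaMem P p → ThetaLE p (lam, fun v => {x | P.le v x}) := by
    rintro ⟨u, ρ⟩ ⟨hlin, horn, -⟩
    constructor
    · rintro ⟨a, b⟩ ⟨hab, hinv⟩
      have hab' : (a : ℕ) < (b : ℕ) := hab
      have hinv' : ((u.symm b : Fin n) : ℕ) < ((u.symm a : Fin n) : ℕ) := hinv
      refine ⟨hab, ?_⟩
      have hnle : ¬ P.le a b := by
        intro h
        have t1 : ((u.symm a : Fin n) : ℕ) ≤ ((u.symm b : Fin n) : ℕ) := hlin a b h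
        exact absurd t1 (Nat.not_le.mpr hinv')
      have hnL : ¬ Lrel m a b := by
        rintro (⟨hx, hy⟩ | ⟨hx, hy⟩)
        · exact hnle ((hcomp a b).mpr ⟨hx, hy⟩)
        · have t1 : (b : ℕ) ≤ (a : ℕ) := hx
          exact absurd hab' (Nat.not_lt.mpr t1)
      have h2 : ¬ (lam.symm a ≤ lam.symm b) := fun h => hnL ((key a b).mp h)
      have h3 : ¬ ((lam.symm a : ℕ) ≤ (lam.symm b : ℕ)) := fun hc => h2 hc
      show ((lam.symm b : Fin n) : ℕ) < ((lam.symm a : Fin n) : ℕ)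
      exact Nat.not_le.mp h3
    · intro v x hx
      exact (horn.1 v).2.1 x hx
  refine ⟨⟨?_, ?_⟩, (lam, fun v => {x | P.le v x}), ⟨qmem, qmax⟩, ?_⟩
  · -- membership of the minimal pair
    refine ⟨?_, ⟨?_, ?_⟩, ?_⟩
    · intro x y h
      simpa using hnat x y h
    · intro v
      refine ⟨rfl, ?_, ?_⟩
      · intro x hx
        rw [Set.mem_singleton_iff] at hx
        subst hx
        exact P.le_refl x
      · intro x hx y hvy hyx
        rw [Set.mem_singleton_iff] at hx ⊢
        rw [hx] at hyx
        exact P.le_antisymm _ _ hyx hvy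
    · intro v w
      by_cases h : v = w
      · subst h; exact Or.inl subset_rfl
      · exact Or.inr (Or.inr (by simp [Set.disjoint_singleton, h]))
    · intro v
      refine ⟨(v : ℕ), 1, ?_⟩
      apply Set.ext
      intro x
      simp only [Set.mem_singleton_iff, Set.mem_setOf_eq, Equiv.refl_symm, Equiv.refl_apply]
      rw [Fin.ext_iff]
      omega
  · -- minimality
    rintro ⟨u, ρ⟩ ⟨-, horn, -⟩
    constructor
    · rintro ⟨a, b⟩ ⟨hab, hinv⟩
      have t1 : (a : ℕ) < (b : ℕ) := hab
      have t2 : (b : ℕ) < (a : ℕ) := hinv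
      exact absurd (lt_trans t1 t2) (lt_irrefl _)
    · intro v x hx
      rw [Set.mem_singleton_iff] at hx
      subst hx
      exact (horn.1 x).1
  · -- uniqueness of the maximal pair
    rintro ⟨u, ρ⟩ ⟨hmem', hmax'⟩
    have hA := hmax' _ qmem
    have hB := qmax (u, ρ) hmem'
    have hu : u = lam := inversions_injective (Set.Subset.antisymm hB.1 hA.1)
    have hρ : ρ = fun v => {x | P.le v x} :=
      funext fun v => Set.Subset.antisymm (hB.2 v) (hA.2 v)
    exact Prod.ext hu hρ
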